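/- A function f : S^{3×3} → ℝ is symmetric polyaffine (i.e., both f and −f are symmetric polyconvex) if and only if f is affine, i.e., there exist B ∈ S^{3×3} and b ∈ ℝ such that f(ε) = B:ε + b for all ε ∈ S^{3×3}. -/

import Mathlib

open Matrix

/-- The symmetric part `(F + Fᵀ)/2` of a 3×3 matrix. -/
noncomputable def symPart (F : Matrix (Fin 3) (Fin 3) ℝ) : Matrix (Fin 3) (Fin 3) ℝ :=
  (1 / 2 : ℝ) • (F + Fᵀ)

/-- The cofactor matrix: `(cof F)_{ij} = (-1)^{i+j}` times the determinant of the 2×2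
matrix obtained from `F` by deleting row `i` and column `j`. -/
noncomputable def cof (F : Matrix (Fin 3) (Fin 3) ℝ) : Matrix (Fin 3) (Fin 3) ℝ :=
  Matrix.of fun i j =>
    (-1 : ℝ) ^ ((i : ℕ) + (j : ℕ)) * (F.submatrix i.succAbove j.succAbove).det

/-- Frobenius inner product `A:B = Σ_{i,j} A_{ij} B_{ij}` of 3×3 matrices. -/
def mdot (A B : Matrix (Fin 3) (Fin 3) ℝ) : ℝ := ∑ i, ∑ j, A i j * B i j

/-- A function `W : ℝ^{3×3} → ℝ` is polyconvex if there is a convex function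
`G : ℝ^{3×3} × ℝ^{3×3} × ℝ → ℝ` with `W F = G (F, cof F, det F)` for all `F`. -/
def Polyconvex3 (W : Matrix (Fin 3) (Fin 3) ℝ → ℝ) : Prop :=
  ∃ G : Matrix (Fin 3) (Fin 3) ℝ × Matrix (Fin 3) (Fin 3) ℝ × ℝ → ℝ,
    ConvexOn ℝ Set.univ G ∧ ∀ F : Matrix (Fin 3) (Fin 3) ℝ, W F = G (F, cof F, F.det)

/-- `f : S^{3×3} → ℝ` is symmetric polyconvex if `F ↦ f (Fˢ)` is polyconvex. -/
def SymPolyconvex3 (f : Matrix (Fin 3) (Fin 3) ℝ → ℝ) : Prop :=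
  Polyconvex3 (fun F => f (symPart F))

/-- `B ∈ S^{3×3}` is negative semi-definite: `Bx·x ≤ 0` for all `x ∈ ℝ³`. -/
def NegSemidefM (B : Matrix (Fin 3) (Fin 3) ℝ) : Prop :=
  ∀ x : Fin 3 → ℝ, B.mulVec x ⬝ᵥ x ≤ 0

/-- `A ∈ S^{3×3}` is positive semi-definite: `Ax·x ≥ 0` for all `x ∈ ℝ³`. -/
def PosSemidefM (A : Matrix (Fin 3) (Fin 3) ℝ) : Prop :=
  ∀ x : Fin 3 → ℝ, 0 ≤ A.mulVec x ⬝ᵥ x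

/-- The symmetrized tensor product `a ⊙ b = (a⊗b + b⊗a)/2`. -/
noncomputable def symProd (a b : Fin 3 → ℝ) : Matrix (Fin 3) (Fin 3) ℝ :=
  (1 / 2 : ℝ) • (vecMulVec a b + vecMulVec b a)

/-- `f : S^{3×3} → ℝ` is symmetric rank-one convex if `t ↦ f (ε + t a⊙b)` is convex
for every symmetric `ε` and all `a, b ∈ ℝ³`. -/
def SymRankOneConvex3 (f : Matrix (Fin 3) (Fin 3) ℝ → ℝ) : Prop :=
  ∀ ε : Matrix (Fin 3) (Fin 3) ℝ, ε.IsSymm → ∀ a b : Fin 3 → ℝ,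
    ConvexOn ℝ Set.univ (fun t : ℝ => f (ε + t • symProd a b))

/- ---------------- auxiliary lemmas ---------------- -/

lemma cof_line' (F : Matrix (Fin 3) (Fin 3) ℝ) (a b : Fin 3 → ℝ) (t : ℝ) :
    cof (F + t • vecMulVec a b) = cof F + t • (cof (F + vecMulVec a b) - cof F) := by
  ext i j
  fin_cases i <;> fin_cases j <;>
    simp [cof, Matrix.det_fin_two, Fin.succAbove, vecMulVec, Matrix.add_apply, Matrix.smul_apply,
      Matrix.sub_apply] <;> ring

lemma det_line' (F : Matrix (Fin 3) (Fin 3) ℝ) (a b : Fin 3 → ℝ) (t : ℝ) :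
    (F + t • vecMulVec a b).det = F.det + t • ((F + vecMulVec a b).det - F.det) := by
  simp [Matrix.det_fin_three, vecMulVec, Matrix.add_apply, Matrix.smul_apply, smul_eq_mul]
  ring

lemma affine_of_convex_concave' {g : ℝ → ℝ} (hc : ConvexOn ℝ Set.univ g)
    (hk : ConcaveOn ℝ Set.univ g) (t : ℝ) : g t = g 0 + t * (g 1 - g 0) := by
  have key : ∀ x y : ℝ, ∀ l m : ℝ, 0 ≤ l → 0 ≤ m → l + m = 1 →
      g (l * x + m * y) = l * g x + m * g y := by
    intro x y l m hl hm hlm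
    have h1 := hc.2 (Set.mem_univ x) (Set.mem_univ y) hl hm hlm
    have h2 := hk.2 (Set.mem_univ x) (Set.mem_univ y) hl hm hlm
    simp [smul_eq_mul] at h1 h2
    linarith
  rcases le_or_gt 0 t with ht | ht
  · rcases le_or_gt t 1 with ht1 | ht1
    · have := key 1 0 t (1 - t) ht (by linarith) (by ring)
      simp at this; linarith [this]
    · have htpos : (0:ℝ) < t := by linarith
      have := key t 0 (1/t) (1 - 1/t) (by positivity)
        (by rw [sub_nonneg]; exact div_le_one_of_le₀ (by linarith) (le_of_lt htpos))
        (by ring)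
      have h1 : (1:ℝ)/t * t + (1 - 1/t) * 0 = 1 := by field_simp; ring
      rw [h1] at this
      field_simp at this
      nlinarith [this]
  · have h1t : (0:ℝ) < 1 - t := by linarith
    have := key t 1 (1/(1-t)) (1 - 1/(1-t)) (by positivity)
      (by rw [sub_nonneg]; exact div_le_one_of_le₀ (by linarith) (le_of_lt h1t)) (by ring)
    have h0 : 1/(1-t) * t + (1 - 1/(1-t)) * 1 = 0 := by field_simp; ring
    rw [h0] at this
    field_simp at this
    nlinarith [this]

lemma symPart_line' (ε : Matrix (Fin 3) (Fin 3) ℝ) (hε : ε.IsSymm) (a b : Fin 3 → ℝ) (t : ℝ) :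
    symPart (ε + t • vecMulVec a b) = ε + t • symProd a b := by
  have hT : (vecMulVec a b)ᵀ = vecMulVec b a := by
    ext i j; simp [vecMulVec, mul_comm]
  unfold symPart symProd
  rw [Matrix.transpose_add, Matrix.transpose_smul, hT, Matrix.IsSymm.eq hε]
  module

lemma symROC_of_symPolyconvex' {f : Matrix (Fin 3) (Fin 3) ℝ → ℝ} (hf : SymPolyconvex3 f)
    (ε : Matrix (Fin 3) (Fin 3) ℝ) (hε : ε.IsSymm) (a b : Fin 3 → ℝ) :
    ConvexOn ℝ Set.univ (fun t : ℝ => f (ε + t • symProd a b)) := by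
  obtain ⟨G, hG, hGf⟩ := hf
  set R := vecMulVec a b with hR
  have hfm : ∀ t : ℝ, f (ε + t • symProd a b)
      = G (ε + t • R, cof (ε + t • R), (ε + t • R).det) := by
    intro t
    rw [← symPart_line' ε hε a b t]
    exact hGf (ε + t • R)
  refine ⟨convex_univ, ?_⟩
  intro x _ y _ l m hl hm hlm
  simp only [smul_eq_mul, hfm]
  have hm' : m = 1 - l := by linarith
  subst hm'
  have key : (ε + (l * x + (1-l) * y) • R, cof (ε + (l * x + (1-l) * y) • R),
        (ε + (l * x + (1-l) * y) • R).det)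
      = l • (ε + x • R, cof (ε + x • R), (ε + x • R).det)
        + (1-l) • (ε + y • R, cof (ε + y • R), (ε + y • R).det) := by
    refine Prod.ext ?_ (Prod.ext ?_ ?_)
    · simp only [Prod.fst_add, Prod.smul_fst]
      module
    · simp only [Prod.snd_add, Prod.smul_snd, Prod.fst_add, Prod.smul_fst]
      rw [cof_line' ε a b (l * x + (1-l) * y), cof_line' ε a b x, cof_line' ε a b y]
      module
    · simp only [Prod.snd_add, Prod.smul_snd]
      rw [det_line' ε a b (l * x + (1-l) * y), det_line' ε a b x, det_line' ε a b y]
      simp only [smul_eq_mul]; ring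
  rw [key]
  exact hG.2 (Set.mem_univ _) (Set.mem_univ _) hl hm hlm

lemma symProd_isSymm' (a b : Fin 3 → ℝ) : (symProd a b).IsSymm := by
  unfold Matrix.IsSymm
  ext i j
  simp [symProd, vecMulVec, Matrix.transpose_apply]
  ring

lemma isSymm_add_smul_symProd' {ε : Matrix (Fin 3) (Fin 3) ℝ} (hε : ε.IsSymm)
    (t : ℝ) (a b : Fin 3 → ℝ) : (ε + t • symProd a b).IsSymm := by
  unfold Matrix.IsSymm
  rw [Matrix.transpose_add, Matrix.transpose_smul, Matrix.IsSymm.eq hε,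
    Matrix.IsSymm.eq (symProd_isSymm' a b)]

lemma aff_all' {f : Matrix (Fin 3) (Fin 3) ℝ → ℝ} (h1 : SymPolyconvex3 f)
    (h2 : SymPolyconvex3 fun ε => -f ε) :
    ∀ ε : Matrix (Fin 3) (Fin 3) ℝ, ε.IsSymm → ∀ a b : Fin 3 → ℝ, ∀ t : ℝ,
      f (ε + t • symProd a b) = f ε + t * (f (ε + symProd a b) - f ε) := by
  intro ε hε a b t
  have hc := symROC_of_symPolyconvex' h1 ε hε a b
  have hcn := symROC_of_symPolyconvex' h2 ε hε a b
  have hk : ConcaveOn ℝ Set.univ (fun t : ℝ => f (ε + t • symProd a b)) := by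
    refine ⟨convex_univ, ?_⟩
    intro x hx y hy l m hl hm hlm
    have := hcn.2 hx hy hl hm hlm
    simp only [smul_eq_mul] at this ⊢
    linarith
  have := affine_of_convex_concave' hc hk t
  simpa using this

lemma symProd_diag_sub' (a b : Fin 3 → ℝ) :
    symProd (a + b) (a - b) = symProd a a - symProd b b := by
  ext i j
  simp [symProd, vecMulVec, Matrix.sub_apply, Matrix.add_apply, Matrix.smul_apply]
  ring

/-- slope along `a ⊙ a` is unchanged by a step `t • b ⊙ b`. -/
lemma inv_step' {f : Matrix (Fin 3) (Fin 3) ℝ → ℝ}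
    (haff : ∀ ε : Matrix (Fin 3) (Fin 3) ℝ, ε.IsSymm → ∀ a b : Fin 3 → ℝ, ∀ t : ℝ,
      f (ε + t • symProd a b) = f ε + t * (f (ε + symProd a b) - f ε))
    (ε : Matrix (Fin 3) (Fin 3) ℝ) (hε : ε.IsSymm) (a b : Fin 3 → ℝ) (t : ℝ) :
    f (ε + t • symProd b b + symProd a a) - f (ε + t • symProd b b)
      = f (ε + symProd a a) - f ε := by
  set P : ℝ → ℝ → ℝ := fun s u => f (ε + s • symProd a a + u • symProd b b) with hP
  have key : ∀ s u : ℝ, P s u = P 0 u + s * (P 1 u - P 0 u) := by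
    intro s u
    have h := haff (ε + u • symProd b b) (isSymm_add_smul_symProd' hε u b b) a a s
    have r1 : ε + u • symProd b b + s • symProd a a
        = ε + s • symProd a a + u • symProd b b := by module
    have r2 : ε + u • symProd b b + symProd a a
        = ε + (1:ℝ) • symProd a a + u • symProd b b := by module
    have r3 : ε + u • symProd b b = ε + (0:ℝ) • symProd a a + u • symProd b b := by module
    rw [r1, r2, r3] at h
    exact h
  have key2 : ∀ s u : ℝ, P s u = P s 0 + u * (P s 1 - P s 0) := by
    intro s u
    have h := haff (ε + s • symProd a a) (isSymm_add_smul_symProd' hε s a a) b b u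
    have r2 : ε + s • symProd a a + symProd b b
        = ε + s • symProd a a + (1:ℝ) • symProd b b := by module
    have r3 : ε + s • symProd a a = ε + s • symProd a a + (0:ℝ) • symProd b b := by module
    rw [r2] at h
    rw [r3] at h
    have r4 : ε + s • symProd a a + (0:ℝ) • symProd b b + u • symProd b b
        = ε + s • symProd a a + u • symProd b b := by module
    have r5 : ε + s • symProd a a + (0:ℝ) • symProd b b + (1:ℝ) • symProd b b
        = ε + s • symProd a a + (1:ℝ) • symProd b b := by module
    rw [r4, r5] at h
    exact h
  have h3 := haff (ε + (1:ℝ) • symProd b b)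
      (isSymm_add_smul_symProd' hε 1 b b) (a + b) (a - b) 2
  rw [symProd_diag_sub'] at h3
  have r4 : ε + (1:ℝ) • symProd b b + (2:ℝ) • (symProd a a - symProd b b)
      = ε + (2:ℝ) • symProd a a + (-1:ℝ) • symProd b b := by module
  have r5 : ε + (1:ℝ) • symProd b b + (symProd a a - symProd b b)
      = ε + (1:ℝ) • symProd a a + (0:ℝ) • symProd b b := by module
  have r6 : ε + (1:ℝ) • symProd b b = ε + (0:ℝ) • symProd a a + (1:ℝ) • symProd b b := by module
  rw [r4, r5, r6] at h3
  -- h3 : P 2 (-1) = P 0 1 + 2 * (P 1 0 - P 0 1)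
  have k1 := key 2 (-1)
  have k2 := key2 1 (-1)
  have k3 := key2 0 (-1)
  have hγ : P 1 1 - P 1 0 - P 0 1 + P 0 0 = 0 := by linarith
  have kt := key2 1 t
  have kt0 := key2 0 t
  have goalP : P 1 t - P 0 t = P 1 0 - P 0 0 := by linear_combination kt - kt0 + t * hγ
  have e1 : f (ε + t • symProd b b + symProd a a) = P 1 t := by
    simp only [hP]; exact congrArg f (by module)
  have e2 : f (ε + t • symProd b b) = P 0 t := by
    simp only [hP]; exact congrArg f (by module)
  have e3 : f (ε + symProd a a) = P 1 0 := by
    simp only [hP]; exact congrArg f (by module)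
  have e4 : f ε = P 0 0 := by
    simp only [hP]; exact congrArg f (by module)
  rw [e1, e2, e3, e4]
  exact goalP

lemma isSymm_zero3' : (0 : Matrix (Fin 3) (Fin 3) ℝ).IsSymm := by
  unfold Matrix.IsSymm; exact Matrix.transpose_zero

lemma symPart_isSymm' (F : Matrix (Fin 3) (Fin 3) ℝ) : (symPart F).IsSymm := by
  unfold Matrix.IsSymm symPart
  rw [Matrix.transpose_smul, Matrix.transpose_add, Matrix.transpose_transpose, add_comm]

lemma symProd_apply' (a b : Fin 3 → ℝ) (i j : Fin 3) :
    symProd a b i j = (a i * b j + b i * a j) / 2 := by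
  simp [symProd, vecMulVec, Matrix.add_apply, Matrix.smul_apply]
  ring

/-- decomposition of a symmetric matrix into six PSD rank-one pieces -/
lemma decomp6' (ε : Matrix (Fin 3) (Fin 3) ℝ) (hε : ε.IsSymm) :
    (0 : Matrix (Fin 3) (Fin 3) ℝ)
      + (ε 0 0 - ε 0 1 - ε 0 2) • symProd ![1,0,0] ![1,0,0]
      + (ε 1 1 - ε 0 1 - ε 1 2) • symProd ![0,1,0] ![0,1,0]
      + (ε 2 2 - ε 0 2 - ε 1 2) • symProd ![0,0,1] ![0,0,1]
      + (ε 0 1) • symProd ![1,1,0] ![1,1,0]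
      + (ε 0 2) • symProd ![1,0,1] ![1,0,1]
      + (ε 1 2) • symProd ![0,1,1] ![0,1,1] = ε := by
  have h10 : ε 1 0 = ε 0 1 := by
    have := congrFun (congrFun hε 0) 1; simpa [Matrix.transpose_apply] using this
  have h20 : ε 2 0 = ε 0 2 := by
    have := congrFun (congrFun hε 0) 2; simpa [Matrix.transpose_apply] using this
  have h21 : ε 2 1 = ε 1 2 := by
    have := congrFun (congrFun hε 1) 2; simpa [Matrix.transpose_apply] using this
  ext i j
  simp only [Matrix.add_apply, Matrix.smul_apply, Matrix.zero_apply, symProd_apply',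
    smul_eq_mul]
  fin_cases i <;> fin_cases j <;>
    [skip; skip; skip; skip; skip; skip; skip; skip; skip] <;>
    norm_num [Matrix.cons_val_zero, Matrix.cons_val_one, Matrix.head_cons,
      Matrix.cons_val_two, Matrix.tail_cons, Matrix.head_fin_const, Fin.mk_zero,
      Fin.mk_one, show ((⟨2, by norm_num⟩ : Fin 3)) = 2 from rfl] <;>
    linarith [h10, h20, h21]

lemma slope_const' {f : Matrix (Fin 3) (Fin 3) ℝ → ℝ}
    (haff : ∀ ε : Matrix (Fin 3) (Fin 3) ℝ, ε.IsSymm → ∀ a b : Fin 3 → ℝ, ∀ t : ℝ,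
      f (ε + t • symProd a b) = f ε + t * (f (ε + symProd a b) - f ε))
    (ε : Matrix (Fin 3) (Fin 3) ℝ) (hε : ε.IsSymm) (a : Fin 3 → ℝ) :
    f (ε + symProd a a) - f ε = f (symProd a a) - f 0 := by
  set D : Matrix (Fin 3) (Fin 3) ℝ → ℝ := fun η => f (η + symProd a a) - f η with hD
  have stepD : ∀ η : Matrix (Fin 3) (Fin 3) ℝ, η.IsSymm → ∀ (b : Fin 3 → ℝ) (t : ℝ),
      D (η + t • symProd b b) = D η := by
    intro η hη b t
    simp only [hD]
    exact inv_step' haff η hη a b t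
  have i0 := isSymm_zero3'
  have i1 := isSymm_add_smul_symProd' i0 (ε 0 0 - ε 0 1 - ε 0 2) ![1,0,0] ![1,0,0]
  have i2 := isSymm_add_smul_symProd' i1 (ε 1 1 - ε 0 1 - ε 1 2) ![0,1,0] ![0,1,0]
  have i3 := isSymm_add_smul_symProd' i2 (ε 2 2 - ε 0 2 - ε 1 2) ![0,0,1] ![0,0,1]
  have i4 := isSymm_add_smul_symProd' i3 (ε 0 1) ![1,1,0] ![1,1,0]
  have i5 := isSymm_add_smul_symProd' i4 (ε 0 2) ![1,0,1] ![1,0,1]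
  have key : D ε = D 0 := by
    rw [← decomp6' ε hε]
    rw [stepD _ i5 ![0,1,1] (ε 1 2)]
    rw [stepD _ i4 ![1,0,1] (ε 0 2)]
    rw [stepD _ i3 ![1,1,0] (ε 0 1)]
    rw [stepD _ i2 ![0,0,1] (ε 2 2 - ε 0 2 - ε 1 2)]
    rw [stepD _ i1 ![0,1,0] (ε 1 1 - ε 0 1 - ε 1 2)]
    rw [stepD _ i0 ![1,0,0] (ε 0 0 - ε 0 1 - ε 0 2)]
  simp only [hD, zero_add] at key
  exact key

/-- telescoped affine formula -/
lemma telescope' {f : Matrix (Fin 3) (Fin 3) ℝ → ℝ}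
    (haff : ∀ ε : Matrix (Fin 3) (Fin 3) ℝ, ε.IsSymm → ∀ a b : Fin 3 → ℝ, ∀ t : ℝ,
      f (ε + t • symProd a b) = f ε + t * (f (ε + symProd a b) - f ε))
    (ε : Matrix (Fin 3) (Fin 3) ℝ) (hε : ε.IsSymm) :
    f ε = f 0
      + (ε 0 0 - ε 0 1 - ε 0 2) * (f (symProd ![1,0,0] ![1,0,0]) - f 0)
      + (ε 1 1 - ε 0 1 - ε 1 2) * (f (symProd ![0,1,0] ![0,1,0]) - f 0)
      + (ε 2 2 - ε 0 2 - ε 1 2) * (f (symProd ![0,0,1] ![0,0,1]) - f 0)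
      + (ε 0 1) * (f (symProd ![1,1,0] ![1,1,0]) - f 0)
      + (ε 0 2) * (f (symProd ![1,0,1] ![1,0,1]) - f 0)
      + (ε 1 2) * (f (symProd ![0,1,1] ![0,1,1]) - f 0) := by
  have i0 := isSymm_zero3'
  have i1 := isSymm_add_smul_symProd' i0 (ε 0 0 - ε 0 1 - ε 0 2) ![1,0,0] ![1,0,0]
  have i2 := isSymm_add_smul_symProd' i1 (ε 1 1 - ε 0 1 - ε 1 2) ![0,1,0] ![0,1,0]
  have i3 := isSymm_add_smul_symProd' i2 (ε 2 2 - ε 0 2 - ε 1 2) ![0,0,1] ![0,0,1]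
  have i4 := isSymm_add_smul_symProd' i3 (ε 0 1) ![1,1,0] ![1,1,0]
  have i5 := isSymm_add_smul_symProd' i4 (ε 0 2) ![1,0,1] ![1,0,1]
  conv_lhs => rw [← decomp6' ε hε]
  rw [haff _ i5 ![0,1,1] ![0,1,1] (ε 1 2), slope_const' haff _ i5 ![0,1,1]]
  rw [haff _ i4 ![1,0,1] ![1,0,1] (ε 0 2), slope_const' haff _ i4 ![1,0,1]]
  rw [haff _ i3 ![1,1,0] ![1,1,0] (ε 0 1), slope_const' haff _ i3 ![1,1,0]]
  rw [haff _ i2 ![0,0,1] ![0,0,1] (ε 2 2 - ε 0 2 - ε 1 2), slope_const' haff _ i2 ![0,0,1]]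
  rw [haff _ i1 ![0,1,0] ![0,1,0] (ε 1 1 - ε 0 1 - ε 1 2), slope_const' haff _ i1 ![0,1,0]]
  rw [haff _ i0 ![1,0,0] ![1,0,0] (ε 0 0 - ε 0 1 - ε 0 2), slope_const' haff _ i0 ![1,0,0]]

lemma mdot_symPart_affine' (B : Matrix (Fin 3) (Fin 3) ℝ) (l : ℝ)
    (X Y : Matrix (Fin 3) (Fin 3) ℝ) :
    mdot B (symPart (l • X + (1 - l) • Y))
      = l * mdot B (symPart X) + (1 - l) * mdot B (symPart Y) := by
  simp only [mdot, symPart, Matrix.add_apply, Matrix.smul_apply, Matrix.transpose_apply,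
    smul_eq_mul, Fin.sum_univ_three]
  ring

/-- A function on `S^{3×3}` is symmetric polyaffine iff it is affine. -/
theorem symmetric_polyaffine_iff_affine_3d (f : Matrix (Fin 3) (Fin 3) ℝ → ℝ) :
    (SymPolyconvex3 f ∧ SymPolyconvex3 (fun ε => -f ε)) ↔
      ∃ (B : Matrix (Fin 3) (Fin 3) ℝ) (b : ℝ), B.IsSymm ∧
        ∀ ε : Matrix (Fin 3) (Fin 3) ℝ, ε.IsSymm → f ε = mdot B ε + b := by
  constructor
  · rintro ⟨h1, h2⟩
    have haff := aff_all' h1 h2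
    set γ1 := f (symProd ![1,0,0] ![1,0,0]) - f 0 with hγ1
    set γ2 := f (symProd ![0,1,0] ![0,1,0]) - f 0 with hγ2
    set γ3 := f (symProd ![0,0,1] ![0,0,1]) - f 0 with hγ3
    set γ4 := f (symProd ![1,1,0] ![1,1,0]) - f 0 with hγ4
    set γ5 := f (symProd ![1,0,1] ![1,0,1]) - f 0 with hγ5
    set γ6 := f (symProd ![0,1,1] ![0,1,1]) - f 0 with hγ6
    refine ⟨Matrix.of ![![γ1, (γ4-γ1-γ2)/2, (γ5-γ1-γ3)/2],
        ![(γ4-γ1-γ2)/2, γ2, (γ6-γ2-γ3)/2],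
        ![(γ5-γ1-γ3)/2, (γ6-γ2-γ3)/2, γ3]], f 0, ?_, ?_⟩
    · unfold Matrix.IsSymm
      ext i j
      fin_cases i <;> fin_cases j <;> simp
    · intro ε hε
      have h10 : ε 1 0 = ε 0 1 := by
        have := congrFun (congrFun hε 0) 1; simpa [Matrix.transpose_apply] using this
      have h20 : ε 2 0 = ε 0 2 := by
        have := congrFun (congrFun hε 0) 2; simpa [Matrix.transpose_apply] using this
      have h21 : ε 2 1 = ε 1 2 := by
        have := congrFun (congrFun hε 1) 2; simpa [Matrix.transpose_apply] using this
      rw [telescope' haff ε hε]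
      simp only [mdot, Fin.sum_univ_three, Matrix.of_apply, Matrix.cons_val_zero,
        Matrix.cons_val_one, Matrix.head_cons, Matrix.cons_val_two, Matrix.tail_cons,
        Matrix.head_fin_const, ← hγ1, ← hγ2, ← hγ3, ← hγ4, ← hγ5, ← hγ6]
      rw [h10, h20, h21]
      ring
  · rintro ⟨B, b, hB, hf⟩
    constructor
    · refine ⟨fun p => mdot B (symPart p.1) + b, ⟨convex_univ, ?_⟩, ?_⟩
      · intro x _ y _ l m hl hm hlm
        have hm' : m = 1 - l := by linarith
        subst hm'
        simp only [smul_eq_mul, Prod.fst_add, Prod.smul_fst]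
        rw [mdot_symPart_affine' B l x.1 y.1]
        apply le_of_eq
        ring
      · intro F
        exact hf (symPart F) (symPart_isSymm' F)
    · refine ⟨fun p => -(mdot B (symPart p.1) + b), ⟨convex_univ, ?_⟩, ?_⟩
      · intro x _ y _ l m hl hm hlm
        have hm' : m = 1 - l := by linarith
        subst hm'
        simp only [smul_eq_mul, Prod.fst_add, Prod.smul_fst]
        rw [mdot_symPart_affine' B l x.1 y.1]
        apply le_of_eq
        ring
      · intro F
        simp only
        rw [hf (symPart F) (symPart_isSymm' F)]
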